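/- No ultrafilter in the closure of the smallest two-sided ideal K(βℤ) of the semigroup (βℤ, +) is ℤ-Ramsey. -/

import Mathlib

attribute [local instance] Ultrafilter.add Ultrafilter.addSemigroup

def IsZRamsey (U : Ultrafilter ℤ) : Prop :=
  ∀ χ' : ℤ → Bool, ∃ U₀ ∈ U, ∃ c : Bool,
    ∀ x ∈ U₀, ∀ y ∈ U₀, x ≠ y → χ' |y - x| = c

/-- A (nonempty) two-sided ideal of the semigroup `(βℤ, +)`. -/
def IsTwoSidedIdeal (I : Set (Ultrafilter ℤ)) : Prop :=
  I.Nonempty ∧ ∀ p ∈ I, ∀ q : Ultrafilter ℤ, q + p ∈ I ∧ p + q ∈ I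

/-- The smallest two-sided ideal `K(βℤ)`, realized as the intersection of all
two-sided ideals. -/
def KBetaZ : Set (Ultrafilter ℤ) := ⋂₀ {I | IsTwoSidedIdeal I}

/-! ### Auxiliary combinatorics -/

/-- The difference set of `A`. -/
def diffs (A : Set ℤ) : Set ℤ := {d | ∃ a ∈ A, ∃ b ∈ A, a - b = d}

/-- Syndetic sets. -/
def Syn (D : Set ℤ) : Prop := ∃ F : Finset ℤ, ∀ z : ℤ, ∃ f ∈ F, f + z ∈ D

/-- `A` has syndetic difference set. -/
def DLarge (A : Set ℤ) : Prop := Syn (diffs A)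

/-- Thick sets. -/
def Thick (T : Set ℤ) : Prop := ∀ H : Finset ℤ, ∃ t : ℤ, ∀ h ∈ H, h + t ∈ T

lemma syn_mono {D E : Set ℤ} (h : D ⊆ E) : Syn D → Syn E := by
  rintro ⟨F, hF⟩
  exact ⟨F, fun z => by obtain ⟨f, hf, hfd⟩ := hF z; exact ⟨f, hf, h hfd⟩⟩

lemma dl_mono {A B : Set ℤ} (h : A ⊆ B) : DLarge A → DLarge B := by
  refine syn_mono ?_
  rintro d ⟨a, ha, b, hb, rfl⟩
  exact ⟨a, h ha, b, h hb, rfl⟩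

lemma dl_of_shift_subset {A B : Set ℤ} {x : ℤ} (h : ∀ a ∈ A, x + a ∈ B) :
    DLarge A → DLarge B := by
  refine syn_mono ?_
  rintro d ⟨a, ha, b, hb, rfl⟩
  exact ⟨x + a, h a ha, x + b, h b hb, by ring⟩

/-- Chains avoiding a non-syndetic set. -/
lemma exists_chain {D : Set ℤ} (hD : ∀ F : Finset ℤ, ∃ s : ℤ, ∀ f ∈ F, f + s ∉ D) :
    ∀ m : ℕ, ∃ s : ℕ → ℤ, ∀ i j : ℕ, i < j → j < m → s j - s i ∉ D := by
  intro m
  induction m with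
  | zero => exact ⟨fun _ => 0, fun i j _ hj => absurd hj (Nat.not_lt_zero j)⟩
  | succ m ih =>
    obtain ⟨s, hs⟩ := ih
    obtain ⟨t, ht⟩ := hD ((Finset.range m).image fun i => -(s i))
    refine ⟨fun k => if k < m then s k else t, fun i j hij hj => ?_⟩
    rcases Nat.lt_succ_iff_lt_or_eq.mp hj with hj' | rfl
    · simpa [hj', lt_trans hij hj'] using hs i j hij hj'
    · have hi : i < j := hij
      have h1 : -(s i) ∈ (Finset.range j).image fun i => -(s i) :=
        Finset.mem_image.mpr ⟨i, Finset.mem_range.mpr hi, rfl⟩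
      have := ht _ h1
      simpa [hi, sub_eq_neg_add] using this

/-- If a thick set is covered by finitely many sets, one of them has syndetic
difference set. -/
lemma thick_union : ∀ (n : ℕ) (T : Set ℤ), Thick T → ∀ A : Fin n → Set ℤ,
    (T ⊆ ⋃ i, A i) → ∃ i, DLarge (A i) := by
  intro n
  induction n with
  | zero =>
    intro T hT A hc
    obtain ⟨t, ht⟩ := hT {0}
    have := hc (ht 0 (Finset.mem_singleton_self 0))
    simp at this
  | succ n ih =>
    intro T hT A hc
    by_cases hlast : DLarge (A (Fin.last n))
    · exact ⟨Fin.last n, hlast⟩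
    · -- the last set has non-syndetic difference set
      have hD : ∀ F : Finset ℤ, ∃ s : ℤ, ∀ f ∈ F, f + s ∉ diffs (A (Fin.last n)) := by
        by_contra h
        push_neg at h
        obtain ⟨F, hF⟩ := h
        exact hlast ⟨F, fun z => by obtain ⟨f, hf, hfd⟩ := hF z; exact ⟨f, hf, hfd⟩⟩
      -- T \ A (last) is thick
      have hT' : Thick (T \ A (Fin.last n)) := by
        intro H
        obtain ⟨s, hs⟩ := exists_chain hD (H.card + 1)
        obtain ⟨t, ht⟩ := hT ((H ×ˢ Finset.range (H.card + 1)).image fun p => p.1 + s p.2)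
        have key : ∃ j < H.card + 1, ∀ h ∈ H, h + s j + t ∉ A (Fin.last n) := by
          by_contra hcon
          push_neg at hcon
          have hcon' : ∀ j : ℕ, ∃ h : ℤ,
              j < H.card + 1 → h ∈ H ∧ h + s j + t ∈ A (Fin.last n) := by
            intro j
            by_cases hjlt : j < H.card + 1
            · obtain ⟨h, h1, h2⟩ := hcon j hjlt
              exact ⟨h, fun _ => ⟨h1, h2⟩⟩
            · exact ⟨0, fun h => absurd h hjlt⟩
          choose g hg using hcon'
          -- pigeonhole
          obtain ⟨j, hj, j', hj', hne, heq⟩ :=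
            Finset.exists_ne_map_eq_of_card_lt_of_maps_to
              (s := Finset.range (H.card + 1)) (t := H)
              (by simp) (fun j hj => (hg j (Finset.mem_range.mp hj)).1)
          have e1 := (hg j (Finset.mem_range.mp hj)).2
          have e2 := (hg j' (Finset.mem_range.mp hj')).2
          rw [heq] at e1
          rcases hne.lt_or_gt with hlt | hlt
          · exact hs j j' hlt (Finset.mem_range.mp hj')
              ⟨g j' + s j' + t, e2, g j' + s j + t, e1, by ring⟩
          · exact hs j' j hlt (Finset.mem_range.mp hj)
              ⟨g j' + s j + t, e1, g j' + s j' + t, e2, by ring⟩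
        obtain ⟨j, hjlt, hjav⟩ := key
        refine ⟨s j + t, fun h hh => ⟨?_, ?_⟩⟩
        · have : h + s j ∈ (H ×ˢ Finset.range (H.card + 1)).image fun p => p.1 + s p.2 :=
            Finset.mem_image.mpr ⟨(h, j), Finset.mem_product.mpr
              ⟨hh, Finset.mem_range.mpr hjlt⟩, rfl⟩
          have := ht _ this
          simpa [add_assoc] using this
        · have := hjav h hh
          simpa [add_assoc] using this
      have hsub : T \ A (Fin.last n) ⊆ ⋃ i : Fin n, A i.castSucc := by
        intro x hx
        obtain ⟨i, hi⟩ := Set.mem_iUnion.mp (hc hx.1)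
        rcases Fin.eq_castSucc_or_eq_last i with ⟨i', rfl⟩ | rfl
        · exact Set.mem_iUnion.mpr ⟨i', hi⟩
        · exact absurd hi hx.2
      obtain ⟨i, hi⟩ := ih _ hT' (fun i => A i.castSucc) hsub
      exact ⟨i.castSucc, hi⟩

/-- There exists an ultrafilter all of whose members have syndetic difference sets. -/
lemma exists_dl_ultrafilter : ∃ U : Ultrafilter ℤ, ∀ A ∈ U, DLarge A := by
  set 𝒮 : Set (Set ℤ) := (fun X => Xᶜ) '' {X | ¬ DLarge X} with h𝒮
  have hne : (Filter.generate 𝒮).NeBot := by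
    rw [Filter.generate_neBot_iff]
    intro t ht hfin
    by_contra hempty
    obtain ⟨n, f, hf⟩ := hfin.fin_embedding
    have hcov : Set.univ ⊆ ⋃ i : Fin n, (f i)ᶜ := by
      intro x _
      by_contra hx
      simp only [Set.mem_iUnion, Set.mem_compl_iff, not_exists, not_not] at hx
      refine hempty ⟨x, ?_⟩
      intro S hS
      obtain ⟨i, hi⟩ : ∃ i, f i = S := by
        have : S ∈ Set.range f := hf ▸ hS
        obtain ⟨i, hi⟩ := this
        exact ⟨i, hi⟩
      exact hi ▸ hx i
    have hthick : Thick (Set.univ : Set ℤ) := fun H => ⟨0, fun _ _ => trivial⟩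
    obtain ⟨i, hi⟩ := thick_union n _ hthick (fun i => (f i)ᶜ) hcov
    -- but (f i)ᶜ is not DLarge
    have hft : (f i : Set ℤ) ∈ t := by rw [← hf]; exact Set.mem_range_self i
    have : (f i : Set ℤ) ∈ 𝒮 := ht hft
    obtain ⟨X, hX, hXc⟩ := this
    rw [← hXc, compl_compl] at hi
    exact hX hi
  obtain ⟨U, hU⟩ := Ultrafilter.exists_le (Filter.generate 𝒮)
  refine ⟨U, fun A hA => ?_⟩
  by_contra hdl
  have : Aᶜ ∈ Filter.generate 𝒮 := Filter.mem_generate_of_mem ⟨A, hdl, rfl⟩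
  have hAc : Aᶜ ∈ U := hU this
  exact (Ultrafilter.compl_notMem_iff.mpr hA) hAc

/-- The collection of ultrafilters all of whose members have syndetic difference
sets is a two-sided ideal. -/
lemma isTwoSidedIdeal_dl :
    IsTwoSidedIdeal {V : Ultrafilter ℤ | ∀ A ∈ V, DLarge A} := by
  constructor
  · exact exists_dl_ultrafilter
  · intro p hp q
    constructor
    · -- q + p
      intro B hB
      have hmem : {x : ℤ | {y : ℤ | x + y ∈ B} ∈ p} ∈ q := by
        have := (Ultrafilter.eventually_add q p (· ∈ B)).mp hB
        exact this
      obtain ⟨x, hx⟩ := Ultrafilter.nonempty_of_mem hmem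
      have hA : DLarge {y : ℤ | x + y ∈ B} := hp _ hx
      exact dl_of_shift_subset (fun a ha => ha) hA
    · -- p + q
      intro B hB
      have hmem : {x : ℤ | {y : ℤ | x + y ∈ B} ∈ q} ∈ p := by
        have := (Ultrafilter.eventually_add p q (· ∈ B)).mp hB
        exact this
      have hA : DLarge {x : ℤ | {y : ℤ | x + y ∈ B} ∈ q} := hp _ hmem
      refine syn_mono ?_ hA
      rintro d ⟨a, ha, b, hb, rfl⟩
      have : {y : ℤ | a + y ∈ B} ∩ {y : ℤ | b + y ∈ B} ∈ q := Filter.inter_mem ha hb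
      obtain ⟨y, hy1, hy2⟩ := Ultrafilter.nonempty_of_mem this
      exact ⟨a + y, hy1, b + y, hy2, by ring⟩

/-- Every member of an ultrafilter in the closure of `K(βℤ)` has syndetic
difference set. -/
lemma dl_of_mem_closure_K {U : Ultrafilter ℤ} (hU : U ∈ closure KBetaZ)
    {A : Set ℤ} (hA : A ∈ U) : DLarge A := by
  have hopen : IsOpen {W : Ultrafilter ℤ | A ∈ W} := ultrafilter_isOpen_basic A
  obtain ⟨V, hV1, hV2⟩ := mem_closure_iff.mp hU _ hopen hA
  have : V ∈ {V : Ultrafilter ℤ | ∀ A ∈ V, DLarge A} :=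
    hV2 _ isTwoSidedIdeal_dl
  exact this _ hV1

theorem not_zRamsey_of_mem_closure_K (U : Ultrafilter ℤ)
    (hU : U ∈ closure KBetaZ) : ¬ IsZRamsey U := by
  intro hR
  obtain ⟨U₀, hU₀, c, hmono⟩ := hR (fun m => decide (Nat.log 2 m.natAbs % 2 = 0))
  obtain ⟨F, hF⟩ := dl_of_mem_closure_K hU hU₀
  set M : ℕ := F.sup fun f => f.natAbs with hM
  set j : ℕ := 2 * M + 3 + (if c then 0 else 1) with hj
  have hjpar : decide (j % 2 = 0) = !c := by
    cases c <;> simp [hj, Nat.add_mod, Nat.mul_mod]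
  have hjbig : 2 * M + 1 < 2 ^ j := by
    calc 2 * M + 1 < 2 * M + 3 := by omega
    _ ≤ j := by omega
    _ < 2 ^ j := Nat.lt_two_pow_self
  set N : ℕ := 2 ^ j with hN
  obtain ⟨f, hf, a, ha, b, hb, hab⟩ := hF ((N : ℤ) + M + 1)
  have hfM : f.natAbs ≤ M := Finset.le_sup hf
  set d : ℤ := a - b with hd
  have hdlow : (N : ℤ) + 1 ≤ d := by omega
  have hdhigh : d ≤ (N : ℤ) + 2 * M + 1 := by omega
  have hdpos : 0 < d := by omega
  have hne : b ≠ a := by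
    intro h
    rw [hd, h, sub_self] at hdpos
    exact lt_irrefl 0 hdpos
  have hcol := hmono b hb a ha hne
  have habs : |a - b| = d := abs_of_pos hdpos
  rw [habs] at hcol
  have hnatAbs : 2 ^ j ≤ d.natAbs ∧ d.natAbs < 2 ^ (j + 1) := by
    rw [pow_succ, ← hN]
    omega
  have hlog : Nat.log 2 d.natAbs = j :=
    Nat.log_eq_of_pow_le_of_lt_pow hnatAbs.1 hnatAbs.2
  simp only [hlog] at hcol
  rw [hjpar] at hcol
  cases c <;> simp at hcol
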